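/- arXiv:2505.11306 — 3 statements merged into one kernel-verified Lean document; each statement's English description precedes it below -/
import Mathlib

section
/- Let (β_k)_{k≥1} be a noise schedule with β_k ∈ (0,1), α_k = 1 − β_k, ᾱ_k = ∏_{s=1}^k α_s, and let f, y_0 ∈ ℝ. On a probability space, let (z_k)_{k≥1} be an i.i.d. sequence of standard real Gaussian random variables (each with law N(0,1)), and define the CARD forward chain by Y_0 := y_0 and Y_k := √α_k · Y_{k−1} + (1 − √α_k) · f + √β_k · z_k. Then for every k ≥ 1 the law of Y_k is the real Gaussian measure with mean √ᾱ_k · y_0 + (1 − √ᾱ_k) · f and variance 1 − ᾱ_k. -/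
open MeasureTheory ProbabilityTheory Real NNReal

lemma integrable_rexp_quadratic' {b : ℝ} (hb : b < 0) (c d : ℝ) :
    Integrable fun x : ℝ => rexp (b * x ^ 2 + c * x + d) := by
  have h : ∀ x : ℝ, b * x ^ 2 + c * x + d
      = (-(-b) * (x + c / (2 * b)) ^ 2) + (d - c ^ 2 / (4 * b)) := by
    intro x; have hb' : b ≠ 0 := ne_of_lt hb; field_simp; ring
  simp_rw [h, Real.exp_add]
  exact ((integrable_exp_neg_mul_sq (neg_pos.2 hb)).comp_add_right (c / (2 * b))).mul_const _

lemma integral_rexp_quadratic' {b : ℝ} (hb : b < 0) (c d : ℝ) :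
    ∫ x : ℝ, rexp (b * x ^ 2 + c * x + d)
      = Real.sqrt (π / -b) * rexp (d - c ^ 2 / (4 * b)) := by
  have h : ∀ x : ℝ, b * x ^ 2 + c * x + d
      = (-(-b) * (x + c / (2 * b)) ^ 2) + (d - c ^ 2 / (4 * b)) := by
    intro x; have hb' : b ≠ 0 := ne_of_lt hb; field_simp; ring
  simp_rw [h, Real.exp_add]
  rw [MeasureTheory.integral_mul_const,
    MeasureTheory.integral_add_right_eq_self (fun x : ℝ => rexp (-(-b) * x ^ 2)) (c / (2 * b)),
    integral_gaussian]

lemma gaussianPDFReal_conv {v w : ℝ≥0} (hv : v ≠ 0) (hw : w ≠ 0) (m y : ℝ) :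
    ∫ x : ℝ, gaussianPDFReal m v x * gaussianPDFReal x w y
      = gaussianPDFReal m (v + w) y := by
  have hV : 0 < (v : ℝ) := by exact_mod_cast pos_iff_ne_zero.mpr hv
  have hW : 0 < (w : ℝ) := by exact_mod_cast pos_iff_ne_zero.mpr hw
  have hVne : (v : ℝ) ≠ 0 := ne_of_gt hV
  have hWne : (w : ℝ) ≠ 0 := ne_of_gt hW
  have hVW : (0:ℝ) < (v : ℝ) + (w : ℝ) := by positivity
  set b : ℝ := -((2 * (v : ℝ))⁻¹ + (2 * (w : ℝ))⁻¹) with hbdef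
  have hb : b < 0 := neg_neg_iff_pos.mpr (by positivity)
  have hbne : b ≠ 0 := ne_of_lt hb
  set c : ℝ := m / (v : ℝ) + y / (w : ℝ) with hcdef
  set d : ℝ := -(m ^ 2 * (2 * (v : ℝ))⁻¹) - y ^ 2 * (2 * (w : ℝ))⁻¹ with hddef
  have hexp0 : ∀ x : ℝ, -(x - m) ^ 2 / (2 * (v:ℝ)) + -(y - x) ^ 2 / (2 * (w:ℝ))
      = b * x ^ 2 + c * x + d := by
    intro x; rw [hbdef, hcdef, hddef]; field_simp; ring
  have hpt : ∀ x : ℝ, gaussianPDFReal m v x * gaussianPDFReal x w y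
      = ((Real.sqrt (2 * π * (v : ℝ)))⁻¹ * (Real.sqrt (2 * π * (w : ℝ)))⁻¹)
          * rexp (b * x ^ 2 + c * x + d) := by
    intro x
    simp only [gaussianPDFReal]
    rw [mul_mul_mul_comm, ← Real.exp_add, hexp0 x]
  simp_rw [hpt]
  rw [MeasureTheory.integral_const_mul, integral_rexp_quadratic' hb c d]
  have hE : d - c ^ 2 / (4 * b) = -(y - m) ^ 2 / (2 * ((v:ℝ) + (w:ℝ))) := by
    have hb2 : b = -(((v:ℝ) + (w:ℝ)) / (2 * (v:ℝ) * (w:ℝ))) := by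
      rw [hbdef]; field_simp; ring
    have hVWne : (v:ℝ) + (w:ℝ) ≠ 0 := ne_of_gt hVW
    rw [hcdef, hddef]
    field_simp [hbne]
    rw [hb2]
    field_simp
    ring
  have hC : (Real.sqrt (2 * π * (v : ℝ)))⁻¹ * (Real.sqrt (2 * π * (w : ℝ)))⁻¹
      * Real.sqrt (π / -b) = (Real.sqrt (2 * π * ((v:ℝ) + (w:ℝ))))⁻¹ := by
    rw [← Real.sqrt_inv, ← Real.sqrt_inv, ← Real.sqrt_inv,
      ← Real.sqrt_mul (by positivity), ← Real.sqrt_mul (by positivity)]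
    congr 1
    rw [hbdef]
    have hpi : (π : ℝ) ≠ 0 := Real.pi_ne_zero
    field_simp
    ring
  rw [← mul_assoc, hC, hE, gaussianPDFReal]
  push_cast
  ring

lemma integrable_gaussianPDFReal_mul {v w : ℝ≥0} (hv : v ≠ 0) (hw : w ≠ 0) (m y : ℝ) :
    Integrable fun x : ℝ => gaussianPDFReal m v x * gaussianPDFReal x w y := by
  have hV : 0 < (v : ℝ) := by exact_mod_cast pos_iff_ne_zero.mpr hv
  have hW : 0 < (w : ℝ) := by exact_mod_cast pos_iff_ne_zero.mpr hw
  have hVne : (v : ℝ) ≠ 0 := ne_of_gt hV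
  have hWne : (w : ℝ) ≠ 0 := ne_of_gt hW
  set b : ℝ := -((2 * (v : ℝ))⁻¹ + (2 * (w : ℝ))⁻¹) with hbdef
  have hb : b < 0 := neg_neg_iff_pos.mpr (by positivity)
  set c : ℝ := m / (v : ℝ) + y / (w : ℝ) with hcdef
  set d : ℝ := -(m ^ 2 * (2 * (v : ℝ))⁻¹) - y ^ 2 * (2 * (w : ℝ))⁻¹ with hddef
  have hexp0 : ∀ x : ℝ, -(x - m) ^ 2 / (2 * (v:ℝ)) + -(y - x) ^ 2 / (2 * (w:ℝ))
      = b * x ^ 2 + c * x + d := by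
    intro x; rw [hbdef, hcdef, hddef]; field_simp; ring
  have hpt : ∀ x : ℝ, gaussianPDFReal m v x * gaussianPDFReal x w y
      = ((Real.sqrt (2 * π * (v : ℝ)))⁻¹ * (Real.sqrt (2 * π * (w : ℝ)))⁻¹)
          * rexp (b * x ^ 2 + c * x + d) := by
    intro x
    simp only [gaussianPDFReal]
    rw [mul_mul_mul_comm, ← Real.exp_add, hexp0 x]
  simp_rw [hpt]
  exact (integrable_rexp_quadratic' hb c d).const_mul _

lemma gaussianReal_conv_gaussianReal {m : ℝ} {v w : ℝ≥0} (hv : v ≠ 0) (hw : w ≠ 0) :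
    Measure.map (fun p : ℝ × ℝ => p.1 + p.2) ((gaussianReal m v).prod (gaussianReal 0 w))
      = gaussianReal m (v + w) := by
  have hvw : v + w ≠ 0 := by simp [hv]
  have hker : Continuous fun p : ℝ × ℝ => gaussianPDFReal p.1 w p.2 := by
    unfold gaussianPDFReal
    fun_prop
  ext s hs
  rw [Measure.map_apply measurable_add hs, Measure.prod_apply (measurable_add hs)]
  have h1 : ∀ x : ℝ, gaussianReal 0 w (Prod.mk x ⁻¹' ((fun p : ℝ × ℝ => p.1 + p.2) ⁻¹' s))
      = ∫⁻ y in s, gaussianPDF x w y := by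
    intro x
    have hpre : (Prod.mk x ⁻¹' ((fun p : ℝ × ℝ => p.1 + p.2) ⁻¹' s)) = (fun y => x + y) ⁻¹' s := rfl
    rw [hpre, ← Measure.map_apply (measurable_const_add x) hs, gaussianReal_map_const_add x,
      zero_add, gaussianReal_apply x hw s]
  simp_rw [h1]
  have hmeas2 : Measurable fun p : ℝ × ℝ => gaussianPDF p.1 w p.2 := hker.measurable.ennreal_ofReal
  have hmeas : Measurable fun x : ℝ => ∫⁻ y in s, gaussianPDF x w y :=
    Measurable.lintegral_prod_right hmeas2
  rw [gaussianReal_of_var_ne_zero m hv,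
    lintegral_withDensity_eq_lintegral_mul _ (measurable_gaussianPDF m v) hmeas]
  have h2 : ∀ x : ℝ, gaussianPDF m v x * ∫⁻ y in s, gaussianPDF x w y
      = ∫⁻ y in s, gaussianPDF m v x * gaussianPDF x w y := by
    intro x
    exact (lintegral_const_mul' (gaussianPDF m v x) _ (by simp [gaussianPDF])).symm
  simp_rw [Pi.mul_apply, h2]
  rw [lintegral_lintegral_swap]
  · have h3 : ∀ y : ℝ, ∫⁻ x, gaussianPDF m v x * gaussianPDF x w y
        = gaussianPDF m (v + w) y := by
      intro y
      simp_rw [gaussianPDF, ← ENNReal.ofReal_mul (gaussianPDFReal_nonneg m v _)]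
      rw [← ofReal_integral_eq_lintegral_ofReal (integrable_gaussianPDFReal_mul hv hw m y)
        (ae_of_all _ fun x => mul_nonneg (gaussianPDFReal_nonneg m v x)
          (gaussianPDFReal_nonneg x w y)),
        gaussianPDFReal_conv hv hw m y]
    simp_rw [h3]
    rw [← gaussianReal_apply m hvw s]
  · have hm : Measurable fun p : ℝ × ℝ => gaussianPDF m v p.1 * gaussianPDF p.1 w p.2 :=
      ((measurable_gaussianPDF m v).comp measurable_fst).mul hmeas2
    exact hm.aemeasurable

lemma indepFun_gaussian_add {Ω : Type*} [MeasurableSpace Ω] {μ : Measure Ω}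
    [IsProbabilityMeasure μ] {X Z : Ω → ℝ} (hX : Measurable X) (hZ : Measurable Z)
    (hind : IndepFun X Z μ) {m : ℝ} {v w : ℝ≥0}
    (hXl : Measure.map X μ = gaussianReal m v) (hZl : Measure.map Z μ = gaussianReal 0 w) :
    Measure.map (fun ω => X ω + Z ω) μ = gaussianReal m (v + w) := by
  by_cases hw : w = 0
  · subst hw
    have hZ0 : ∀ᵐ ω ∂μ, Z ω = 0 := by
      have h0 : μ (Z ⁻¹' {(0:ℝ)}ᶜ) = 0 := by
        rw [← Measure.map_apply hZ (measurableSet_singleton (0:ℝ)).compl, hZl,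
          gaussianReal_zero_var]
        simp
      rw [ae_iff]
      convert h0 using 2
      rfl
    have heq : (fun ω => X ω + Z ω) =ᵐ[μ] X := hZ0.mono fun ω h => by simp [h]
    rw [Measure.map_congr heq, hXl, add_zero]
  by_cases hv : v = 0
  · subst hv
    have hX0 : ∀ᵐ ω ∂μ, X ω = m := by
      have h0 : μ (X ⁻¹' {m}ᶜ) = 0 := by
        rw [← Measure.map_apply hX (measurableSet_singleton m).compl, hXl, gaussianReal_zero_var]
        simp
      rw [ae_iff]
      convert h0 using 2
      rfl
    have heq : (fun ω => X ω + Z ω) =ᵐ[μ] (fun ω => m + Z ω) :=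
      hX0.mono fun ω h => by simp [h]
    rw [Measure.map_congr heq]
    have : (fun ω => m + Z ω) = (fun t => m + t) ∘ Z := rfl
    rw [this, ← Measure.map_map (measurable_const_add m) hZ, hZl,
      gaussianReal_map_const_add m, zero_add, zero_add]
  · have hprod : Measure.map (fun ω => (X ω, Z ω)) μ
        = (gaussianReal m v).prod (gaussianReal 0 w) := by
      rw [← hXl, ← hZl]
      exact (indepFun_iff_map_prod_eq_prod_map_map hX.aemeasurable hZ.aemeasurable).1 hind
    have hcomp : (fun ω => X ω + Z ω) = (fun p : ℝ × ℝ => p.1 + p.2) ∘ (fun ω => (X ω, Z ω)) := rfl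
    rw [hcomp, ← Measure.map_map measurable_add (hX.prodMk hZ), hprod,
      gaussianReal_conv_gaussianReal hv hw]

/-- The step-`k` marginal law of the CARD forward chain started at `y₀` with
prior `f` is Gaussian with mean `√ᾱ_k y₀ + (1 - √ᾱ_k) f` and variance `1 - ᾱ_k`. -/
theorem card_forward_chain_marginal_law
    {Ω : Type*} [MeasurableSpace Ω] (μ : Measure Ω) [IsProbabilityMeasure μ]
    (β : ℕ → ℝ) (hβ : ∀ k, 1 ≤ k → β k ∈ Set.Ioo (0 : ℝ) 1)
    (f y₀ : ℝ)
    (z : ℕ → Ω → ℝ) (hzmeas : ∀ k, Measurable (z k))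
    (hzlaw : ∀ k, Measure.map (z k) μ = gaussianReal 0 1)
    (hzindep : iIndepFun z μ)
    (Y : ℕ → Ω → ℝ)
    (hY0 : ∀ ω, Y 0 ω = y₀)
    (hYrec : ∀ k ω, Y (k + 1) ω =
      Real.sqrt (1 - β (k + 1)) * Y k ω + (1 - Real.sqrt (1 - β (k + 1))) * f
        + Real.sqrt (β (k + 1)) * z (k + 1) ω)
    (abar : ℕ → ℝ)
    (habar : ∀ k, abar k = ∏ s ∈ Finset.Icc 1 k, (1 - β s)) :
    ∀ k, 1 ≤ k →
      Measure.map (Y k) μ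
        = gaussianReal (Real.sqrt (abar k) * y₀ + (1 - Real.sqrt (abar k)) * f)
            (Real.toNNReal (1 - abar k)) := by
  have hYmeas : ∀ k, Measurable (Y k) := by
    intro k
    induction k with
    | zero =>
      have h : Y 0 = fun _ => y₀ := funext hY0
      rw [h]; exact measurable_const
    | succ k ih =>
      have h : Y (k+1) = fun ω => Real.sqrt (1 - β (k+1)) * Y k ω
          + (1 - Real.sqrt (1 - β (k+1))) * f + Real.sqrt (β (k+1)) * z (k+1) ω :=
        funext (hYrec k)
      rw [h]
      exact ((ih.const_mul _).add_const _).add ((hzmeas (k+1)).const_mul _)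
  have hrep : ∀ k, ∃ h : (↥(Finset.range (k+1)) → ℝ) → ℝ,
      Measurable h ∧ ∀ ω, Y k ω = h (fun i => z i ω) := by
    intro k
    induction k with
    | zero => exact ⟨fun _ => y₀, measurable_const, fun ω => hY0 ω⟩
    | succ k ih =>
      obtain ⟨h, hm, hYh⟩ := ih
      refine ⟨fun u => Real.sqrt (1 - β (k+1))
          * h (fun i => u ⟨i.1, Finset.mem_range.2 (Nat.lt_succ_of_lt (Finset.mem_range.1 i.2))⟩)
          + (1 - Real.sqrt (1 - β (k+1))) * f
          + Real.sqrt (β (k+1)) * u ⟨k+1, Finset.mem_range.2 (Nat.lt_succ_self _)⟩, ?_, ?_⟩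
      · have hres : Measurable fun (u : ↥(Finset.range (k+2)) → ℝ) =>
            h (fun i => u ⟨i.1, Finset.mem_range.2 (Nat.lt_succ_of_lt (Finset.mem_range.1 i.2))⟩) :=
          hm.comp (measurable_pi_lambda _ fun i => measurable_pi_apply _)
        exact ((hres.const_mul _).add_const _).add ((measurable_pi_apply _).const_mul _)
      · intro ω
        rw [hYrec k ω, hYh ω]
  have hYzind : ∀ k, IndepFun (Y k) (z (k+1)) μ := by
    intro k
    obtain ⟨h, hm, hYh⟩ := hrep k
    have hdisj : Disjoint (Finset.range (k+1)) ({k+1} : Finset ℕ) := by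
      simp [Finset.disjoint_singleton_right]
    have hbase := hzindep.indepFun_finset (Finset.range (k+1)) {k+1} hdisj hzmeas
    have hcomp := hbase.comp hm
      (measurable_pi_apply (⟨k+1, Finset.mem_singleton_self _⟩ : ↥({k+1} : Finset ℕ)))
    have hYe : Y k = h ∘ (fun a (i : ↥(Finset.range (k+1))) => z i a) := funext hYh
    rw [hYe]
    exact hcomp
  have habar_pos : ∀ k, 0 < abar k := by
    intro k
    rw [habar]
    exact Finset.prod_pos fun s hs => by
      have h := hβ s (Finset.mem_Icc.1 hs).1; linarith [h.2]
  have habar_le : ∀ k, abar k ≤ 1 := by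
    intro k
    rw [habar]
    refine Finset.prod_le_one (fun s hs => ?_) (fun s hs => ?_) <;>
      have h := hβ s (Finset.mem_Icc.1 hs).1
    · linarith [h.2]
    · linarith [h.1]
  have main : ∀ k, Measure.map (Y k) μ
      = gaussianReal (Real.sqrt (abar k) * y₀ + (1 - Real.sqrt (abar k)) * f)
          (Real.toNNReal (1 - abar k)) := by
    intro k
    induction k with
    | zero =>
      have h0 : abar 0 = 1 := by rw [habar]; simp
      have hYc : Y 0 = fun _ => y₀ := funext hY0
      rw [hYc, h0, Measure.map_const, measure_univ, one_smul]
      simp [Real.sqrt_one, gaussianReal_zero_var]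
    | succ k ih =>
      have hβk := hβ (k+1) (Nat.le_add_left 1 k)
      set a := Real.sqrt (1 - β (k+1)) with hadef
      set c := Real.sqrt (β (k+1)) with hcdef
      have ha2 : a ^ 2 = 1 - β (k+1) := Real.sq_sqrt (by linarith [hβk.2])
      have hc2 : c ^ 2 = β (k+1) := Real.sq_sqrt (le_of_lt hβk.1)
      set M := Real.sqrt (abar k) * y₀ + (1 - Real.sqrt (abar k)) * f with hMdef
      set V := Real.toNNReal (1 - abar k) with hVdef
      have hXl : Measure.map (fun ω => a * Y k ω + (1 - a) * f) μ
          = gaussianReal (a * M + (1 - a) * f) (NNReal.mk (a ^ 2) (sq_nonneg a) * V) := by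
        have hXdef : (fun ω => a * Y k ω + (1 - a) * f)
            = ((· + (1 - a) * f) ∘ (a * ·)) ∘ Y k := rfl
        rw [hXdef, ← Measure.map_map ((measurable_id'.add_const _).comp
            (measurable_const_mul a)) (hYmeas k), ih,
          ← Measure.map_map (measurable_id'.add_const _) (measurable_const_mul a),
          gaussianReal_map_const_mul a, gaussianReal_map_add_const]
      have hZl : Measure.map (fun ω => c * z (k+1) ω) μ
          = gaussianReal 0 (NNReal.mk (c ^ 2) (sq_nonneg c)) := by
        have hZdef : (fun ω => c * z (k+1) ω) = (c * ·) ∘ z (k+1) := rfl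
        rw [hZdef, ← Measure.map_map (measurable_const_mul c) (hzmeas (k+1)), hzlaw (k+1),
          gaussianReal_map_const_mul c, mul_zero, mul_one]
      have hind : IndepFun (fun ω => a * Y k ω + (1 - a) * f) (fun ω => c * z (k+1) ω) μ :=
        (hYzind k).comp ((measurable_id'.const_mul a).add_const _) (measurable_id'.const_mul c)
      have hsum := indepFun_gaussian_add (((hYmeas k).const_mul a).add_const _)
        ((hzmeas (k+1)).const_mul c) hind hXl hZl
      have hYe : Y (k+1) = fun ω => (a * Y k ω + (1 - a) * f) + c * z (k+1) ω :=
        funext (hYrec k)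
      rw [hYe, hsum]
      have hstep : abar (k+1) = abar k * (1 - β (k+1)) := by
        rw [habar, habar, Finset.prod_Icc_succ_top (Nat.le_add_left 1 k)]
      have hsq : Real.sqrt (abar (k+1)) = Real.sqrt (abar k) * a := by
        rw [hstep, hadef, Real.sqrt_mul (le_of_lt (habar_pos k))]
      have habar1 : abar (k+1) ≤ 1 := habar_le (k+1)
      congr 1
      · rw [hMdef, hsq]; ring
      · apply NNReal.coe_injective
        push_cast
        rw [hVdef, Real.coe_toNNReal _ (by linarith [habar_le k]),
          Real.coe_toNNReal _ (by linarith [habar1]), ha2, hc2, hstep]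
        ring
  exact fun k _ => main k
end

section
/- For m ∈ ℝ and v > 0, write φ(x; m, v) = exp(−(x − m)²/(2v))/√(2πv) for the Gaussian density. Let α_k, ᾱ_{k−1} ∈ (0,1), β_k = 1 − α_k, ᾱ_k = ᾱ_{k−1} α_k, β̃_k = (1 − ᾱ_{k−1}) β_k/(1 − ᾱ_k), and f, y_0, y_{k−1}, y_k ∈ ℝ. Let m̃_k = (β_k √ᾱ_{k−1}/(1 − ᾱ_k)) y_0 + ((1 − ᾱ_{k−1})√α_k/(1 − ᾱ_k)) y_k + (1 + (√ᾱ_k − 1)(√α_k + √ᾱ_{k−1})/(1 − ᾱ_k)) f. Then the Gaussian density factorization holds: φ(y_k; √α_k y_{k−1} + (1 − √α_k) f, β_k) · φ(y_{k−1}; √ᾱ_{k−1} y_0 + (1 − √ᾱ_{k−1}) f, 1 − ᾱ_{k−1}) = φ(y_{k−1}; m̃_k, β̃_k) · φ(y_k; √ᾱ_k y_0 + (1 − √ᾱ_k) f, 1 − ᾱ_k). -/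
/-- The one-dimensional Gaussian density `φ(x; m, v)`. -/
noncomputable def gaussPDF (x m v : ℝ) : ℝ :=
  Real.exp (-(x - m) ^ 2 / (2 * v)) / Real.sqrt (2 * Real.pi * v)

/-- Bayes computation for the CARD reverse posterior: the product of the CARD
one-step transition density and the multi-step marginal density factors as the
posterior density times the step-`k` marginal density. -/
theorem card_posterior_density_factorization
    (αk abar' : ℝ) (hαk : αk ∈ Set.Ioo (0 : ℝ) 1) (habar' : abar' ∈ Set.Ioo (0 : ℝ) 1)
    (βk abar btilde : ℝ) (hβk : βk = 1 - αk) (habar : abar = abar' * αk)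
    (hbtilde : btilde = (1 - abar') * βk / (1 - abar))
    (f y₀ yk' yk : ℝ)
    (mTilde : ℝ)
    (hm : mTilde = (βk * Real.sqrt abar' / (1 - abar)) * y₀
      + ((1 - abar') * Real.sqrt αk / (1 - abar)) * yk
      + (1 + (Real.sqrt abar - 1) * (Real.sqrt αk + Real.sqrt abar') / (1 - abar)) * f) :
    gaussPDF yk (Real.sqrt αk * yk' + (1 - Real.sqrt αk) * f) βk
        * gaussPDF yk' (Real.sqrt abar' * y₀ + (1 - Real.sqrt abar') * f) (1 - abar')
      = gaussPDF yk' mTilde btilde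
        * gaussPDF yk (Real.sqrt abar * y₀ + (1 - Real.sqrt abar) * f) (1 - abar) := by
  obtain ⟨ha0, ha1⟩ := hαk
  obtain ⟨hb0, hb1⟩ := habar'
  set a := Real.sqrt αk with hadef
  set b := Real.sqrt abar' with hbdef
  have ha2 : a ^ 2 = αk := Real.sq_sqrt ha0.le
  have hb2 : b ^ 2 = abar' := Real.sq_sqrt hb0.le
  have habsqrt : Real.sqrt abar = b * a := by
    rw [habar, Real.sqrt_mul hb0.le]
  have habar_lt : abar < 1 := by
    rw [habar]
    nlinarith
  have h1 : (0:ℝ) < 1 - abar' := by linarith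
  have h2 : (0:ℝ) < 1 - abar := by linarith
  have h3 : (0:ℝ) < βk := by rw [hβk]; linarith
  have h4 : (0:ℝ) < btilde := by
    rw [hbtilde]; positivity
  have hπ : (0:ℝ) < Real.pi := Real.pi_pos
  subst hβk habar hbtilde hm
  rw [← ha2, ← hb2] at *
  unfold gaussPDF
  rw [div_mul_div_comm, div_mul_div_comm, ← Real.exp_add, ← Real.exp_add,
    ← Real.sqrt_mul (by positivity), ← Real.sqrt_mul (by positivity)]
  congr 1
  · congr 1
    rw [habsqrt]
    have e1 : (1 - a^2 : ℝ) ≠ 0 := by nlinarith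
    have e2 : (1 - b^2 : ℝ) ≠ 0 := by nlinarith
    have e3 : (1 - b^2 * a^2 : ℝ) ≠ 0 := by nlinarith
    have e4 : (1 - a^2 * b^2 : ℝ) ≠ 0 := by nlinarith
    field_simp
    ring
  · congr 1
    have e3 : (1 - b^2 * a^2 : ℝ) ≠ 0 := by nlinarith
    have e4 : (1 - a^2 * b^2 : ℝ) ≠ 0 := by nlinarith
    field_simp
end

section
/- Let (β_k)_{k≥1} be a noise schedule with β_k ∈ (0,1), α_k = 1 − β_k, ᾱ_k = ∏_{s=1}^k α_s, and let f, y_0 ∈ ℝ. On a probability space, let (z_k)_{k≥1} be an i.i.d. sequence of standard real Gaussian random variables and define the CARD forward chain Y_0 := y_0, Y_k := √α_k Y_{k−1} + (1 − √α_k) f + √β_k z_k. Define the residual chain L_k := Y_k − f. Then for every k ≥ 1 the law of L_k equals the law of the standard DDPM forward chain started at l_0 := y_0 − f, i.e., the real Gaussian measure with mean √ᾱ_k · (y_0 − f) and variance 1 − ᾱ_k. -/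
open MeasureTheory ProbabilityTheory

namespace CardAux

open Real
open scoped ENNReal NNReal

/-- Pointwise convolution identity for Gaussian densities. -/
lemma gaussianPDFReal_conv (m m' : ℝ) (v w : ℝ≥0) (hv : v ≠ 0) (hw : w ≠ 0) (x y : ℝ) :
    gaussianPDFReal m v x * gaussianPDFReal m' w (y - x)
      = gaussianPDFReal (m + m') (v + w) y
        * gaussianPDFReal (m + (v : ℝ) * (y - m - m') / ((v : ℝ) + (w : ℝ)))
            (v * w / (v + w)) x := by
  have hv' : (0:ℝ) < v := by exact_mod_cast pos_iff_ne_zero.mpr hv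
  have hw' : (0:ℝ) < w := by exact_mod_cast pos_iff_ne_zero.mpr hw
  have hvw : (0:ℝ) < (v:ℝ) + w := by linarith
  simp only [gaussianPDFReal]
  push_cast
  have hconst : (√(2 * π * v))⁻¹ * (√(2 * π * w))⁻¹
      = (√(2 * π * ((v:ℝ) + w)))⁻¹ * (√(2 * π * ((v:ℝ) * w / ((v:ℝ) + w))))⁻¹ := by
    rw [← mul_inv, ← mul_inv, ← Real.sqrt_mul (by positivity), ← Real.sqrt_mul (by positivity)]
    congr 1
    field_simp
  have hexp : rexp (-(x - m) ^ 2 / (2 * v)) * rexp (-(y - x - m') ^ 2 / (2 * w))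
      = rexp (-(y - (m + m')) ^ 2 / (2 * ((v:ℝ) + w)))
        * rexp (-(x - (m + (v:ℝ) * (y - m - m') / ((v:ℝ) + w))) ^ 2
            / (2 * ((v:ℝ) * w / ((v:ℝ) + w)))) := by
    rw [← Real.exp_add, ← Real.exp_add]
    congr 1
    field_simp
    ring
  calc (√(2 * π * v))⁻¹ * rexp (-(x - m) ^ 2 / (2 * v))
        * ((√(2 * π * w))⁻¹ * rexp (-(y - x - m') ^ 2 / (2 * w)))
      = (√(2 * π * v))⁻¹ * (√(2 * π * w))⁻¹
        * (rexp (-(x - m) ^ 2 / (2 * v)) * rexp (-(y - x - m') ^ 2 / (2 * w))) := by ring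
    _ = (√(2 * π * ((v:ℝ) + w)))⁻¹ * (√(2 * π * ((v:ℝ) * w / ((v:ℝ) + w))))⁻¹
        * (rexp (-(y - (m + m')) ^ 2 / (2 * ((v:ℝ) + w)))
          * rexp (-(x - (m + (v:ℝ) * (y - m - m') / ((v:ℝ) + w))) ^ 2
            / (2 * ((v:ℝ) * w / ((v:ℝ) + w))))) := by rw [hconst, hexp]
    _ = _ := by ring

/-- Convolution of Gaussian measures. -/
lemma gaussianReal_conv_prod_add (m m' : ℝ) (v w : ℝ≥0) (hw : w ≠ 0) :
    Measure.map (fun p : ℝ × ℝ => p.1 + p.2) ((gaussianReal m v).prod (gaussianReal m' w))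
      = gaussianReal (m + m') (v + w) := by
  by_cases hv : v = 0
  · subst hv
    rw [gaussianReal_zero_var, Measure.dirac_prod,
      Measure.map_map measurable_add measurable_prodMk_left]
    have : ((fun p : ℝ × ℝ => p.1 + p.2) ∘ Prod.mk m) = (m + ·) := rfl
    rw [this, gaussianReal_map_const_add, zero_add, add_comm m' m]
  · have hvw : v + w ≠ 0 := fun h => hv (by simpa using (add_eq_zero.mp h).1)
    have hu : v * w / (v + w) ≠ 0 := div_ne_zero (mul_ne_zero hv hw) hvw
    have hmeas2 : Measurable (fun p : ℝ × ℝ => gaussianPDF (m' + p.1) w p.2) := by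
      simp only [gaussianPDF, gaussianPDFReal]
      fun_prop
    ext s hs
    rw [Measure.map_apply measurable_add hs, Measure.prod_apply (measurable_add hs)]
    have key : ∀ x : ℝ,
        (gaussianReal m' w) (Prod.mk x ⁻¹' ((fun p : ℝ × ℝ => p.1 + p.2) ⁻¹' s))
          = ∫⁻ y in s, gaussianPDF (m' + x) w y := by
      intro x
      have h1 : (Prod.mk x ⁻¹' ((fun p : ℝ × ℝ => p.1 + p.2) ⁻¹' s)) = (x + ·) ⁻¹' s := rfl
      rw [h1, ← Measure.map_apply (measurable_const_add x) hs, gaussianReal_map_const_add,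
        gaussianReal_apply _ hw]
    rw [lintegral_congr key, gaussianReal_of_var_ne_zero m hv,
      lintegral_withDensity_eq_lintegral_mul _ (measurable_gaussianPDF m v)
        (hmeas2.lintegral_prod_right')]
    simp only [Pi.mul_apply]
    have hfmeas : Measurable (fun p : ℝ × ℝ => gaussianPDF m v p.1 * gaussianPDF (m' + p.1) w p.2) :=
      ((measurable_gaussianPDF m v).comp measurable_fst).mul hmeas2
    calc ∫⁻ x, gaussianPDF m v x * ∫⁻ y in s, gaussianPDF (m' + x) w y
        = ∫⁻ x, ∫⁻ y in s, gaussianPDF m v x * gaussianPDF (m' + x) w y := by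
          congr 1; ext x
          rw [lintegral_const_mul _ (measurable_gaussianPDF _ _)]
      _ = ∫⁻ y in s, ∫⁻ x, gaussianPDF m v x * gaussianPDF (m' + x) w y := by
          rw [lintegral_lintegral_swap hfmeas.aemeasurable]
      _ = ∫⁻ y in s, gaussianPDF (m + m') (v + w) y := by
          refine lintegral_congr fun y => ?_
          have hrw : ∀ x : ℝ, gaussianPDF m v x * gaussianPDF (m' + x) w y
              = gaussianPDF (m + m') (v + w) y
                * gaussianPDF (m + (v : ℝ) * (y - m - m') / ((v : ℝ) + (w : ℝ)))
                    (v * w / (v + w)) x := by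
            intro x
            simp only [gaussianPDF]
            rw [← ENNReal.ofReal_mul (gaussianPDFReal_nonneg _ _ _),
              ← ENNReal.ofReal_mul (gaussianPDFReal_nonneg _ _ _)]
            congr 1
            rw [show gaussianPDFReal (m' + x) w y = gaussianPDFReal m' w (y - x) from
              (gaussianPDFReal_sub y x).symm]
            exact gaussianPDFReal_conv m m' v w hv hw x y
          simp_rw [hrw]
          rw [lintegral_const_mul _ (measurable_gaussianPDF _ _),
            lintegral_gaussianPDF_eq_one _ hu, mul_one]
      _ = gaussianReal (m + m') (v + w) s := (gaussianReal_apply _ hvw s).symm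

/-- One step: `a X + b Z` for independent `X ~ N(m,v)`, `Z ~ N(0,1)`. -/
lemma map_const_mul_add_const_mul {Ω : Type*} [MeasurableSpace Ω] {μ : Measure Ω}
    [IsProbabilityMeasure μ] {X Z : Ω → ℝ} (hX : Measurable X) (hZ : Measurable Z)
    (hind : IndepFun X Z μ) {m : ℝ} {v : ℝ≥0}
    (hXl : Measure.map X μ = gaussianReal m v)
    (hZl : Measure.map Z μ = gaussianReal 0 1) (a b : ℝ) (hb : b ≠ 0) :
    Measure.map (fun ω => a * X ω + b * Z ω) μ
      = gaussianReal (a * m) (NNReal.mk (a ^ 2) (sq_nonneg a) * v + NNReal.mk (b ^ 2) (sq_nonneg b)) := by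
  have hXa : Measure.map (fun ω => a * X ω) μ = gaussianReal (a * m) (NNReal.mk (a ^ 2) (sq_nonneg a) * v) := by
    rw [show (fun ω => a * X ω) = (a * ·) ∘ X from rfl,
      ← Measure.map_map (measurable_const_mul a) hX, hXl, gaussianReal_map_const_mul]
  have hZb : Measure.map (fun ω => b * Z ω) μ = gaussianReal 0 (NNReal.mk (b ^ 2) (sq_nonneg b)) := by
    rw [show (fun ω => b * Z ω) = (b * ·) ∘ Z from rfl,
      ← Measure.map_map (measurable_const_mul b) hZ, hZl, gaussianReal_map_const_mul,
      mul_zero, mul_one]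
  have hind' : IndepFun (fun ω => a * X ω) (fun ω => b * Z ω) μ :=
    hind.comp (measurable_const_mul a) (measurable_const_mul b)
  have hprod := (indepFun_iff_map_prod_eq_prod_map_map (hX.const_mul a).aemeasurable
    (hZ.const_mul b).aemeasurable).mp hind'
  have hcomp : (fun ω => a * X ω + b * Z ω)
      = (fun p : ℝ × ℝ => p.1 + p.2) ∘ (fun ω => (a * X ω, b * Z ω)) := rfl
  rw [hcomp, ← Measure.map_map measurable_add ((hX.const_mul a).prodMk (hZ.const_mul b)),
    hprod, hXa, hZb, gaussianReal_conv_prod_add _ _ _ _ (by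
      simp only [ne_eq, ← NNReal.coe_eq_zero]
      exact pow_ne_zero 2 hb), add_zero]

end CardAux

open CardAux in
/-- Forward-process half of the CARD–DMRR equivalence: the residual chain
`L_k = Y_k - f` of the CARD forward chain has the law of the standard DDPM
forward chain started at `l₀ = y₀ - f`, namely
`N(√ᾱ_k (y₀ - f), 1 - ᾱ_k)`. -/
theorem card_residual_chain_law_eq_ddpm
    {Ω : Type*} [MeasurableSpace Ω] (μ : Measure Ω) [IsProbabilityMeasure μ]
    (β : ℕ → ℝ) (hβ : ∀ k, 1 ≤ k → β k ∈ Set.Ioo (0 : ℝ) 1)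
    (f y₀ : ℝ)
    (z : ℕ → Ω → ℝ) (hzmeas : ∀ k, Measurable (z k))
    (hzlaw : ∀ k, Measure.map (z k) μ = gaussianReal 0 1)
    (hzindep : iIndepFun z μ)
    (Y : ℕ → Ω → ℝ)
    (hY0 : ∀ ω, Y 0 ω = y₀)
    (hYrec : ∀ k ω, Y (k + 1) ω =
      Real.sqrt (1 - β (k + 1)) * Y k ω + (1 - Real.sqrt (1 - β (k + 1))) * f
        + Real.sqrt (β (k + 1)) * z (k + 1) ω)
    (L : ℕ → Ω → ℝ) (hL : ∀ k ω, L k ω = Y k ω - f)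
    (abar : ℕ → ℝ)
    (habar : ∀ k, abar k = ∏ s ∈ Finset.Icc 1 k, (1 - β s)) :
    ∀ k, 1 ≤ k →
      Measure.map (L k) μ
        = gaussianReal (Real.sqrt (abar k) * (y₀ - f))
            (Real.toNNReal (1 - abar k)) := by
  -- arithmetic facts about `abar`
  have habar0 : abar 0 = 1 := by rw [habar]; simp
  have habar_succ : ∀ k, abar (k + 1) = abar k * (1 - β (k + 1)) := by
    intro k
    rw [habar, habar, Finset.prod_Icc_succ_top (Nat.succ_le_succ (Nat.zero_le k))]
  have hβmem : ∀ k : ℕ, β (k + 1) ∈ Set.Ioo (0:ℝ) 1 :=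
    fun k => hβ (k + 1) (Nat.succ_le_succ (Nat.zero_le k))
  have habar_pos : ∀ k, 0 < abar k := by
    intro k; induction k with
    | zero => rw [habar0]; norm_num
    | succ k ih =>
      rw [habar_succ]
      have := (hβmem k).2
      nlinarith
  have habar_le : ∀ k, abar k ≤ 1 := by
    intro k; induction k with
    | zero => rw [habar0]
    | succ k ih =>
      rw [habar_succ]
      have h1 := (hβmem k).1
      have h2 := (hβmem k).2
      nlinarith [habar_pos k]
  -- recursion for L
  have hLrec : ∀ k ω, L (k + 1) ω
      = Real.sqrt (1 - β (k + 1)) * L k ω + Real.sqrt (β (k + 1)) * z (k + 1) ω := by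
    intro k ω
    rw [hL, hL, hYrec]; ring
  -- σ-algebras
  set G : ℕ → MeasurableSpace Ω :=
    fun k => ⨆ i ∈ Set.Icc 1 k, MeasurableSpace.comap (z i) inferInstance with hG
  have hGle : ∀ k, G k ≤ ‹MeasurableSpace Ω› := fun k => iSup₂_le fun i _ => (hzmeas i).comap_le
  have hLG : ∀ k, Measurable[G k] (L k) := by
    intro k; induction k with
    | zero =>
      have h0 : L 0 = fun _ => y₀ - f := funext fun ω => by rw [hL, hY0]
      rw [h0]; exact measurable_const
    | succ k ih =>
      have h1 : L (k + 1) = fun ω =>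
          Real.sqrt (1 - β (k + 1)) * L k ω + Real.sqrt (β (k + 1)) * z (k + 1) ω :=
        funext (hLrec k)
      rw [h1]
      have hle : G k ≤ G (k + 1) := biSup_mono (Set.Icc_subset_Icc le_rfl (Nat.le_succ k))
      have hzk : Measurable[G (k + 1)] (z (k + 1)) := by
        have hle2 : MeasurableSpace.comap (z (k + 1)) inferInstance ≤ G (k + 1) :=
          le_iSup₂ (f := fun i (_ : i ∈ Set.Icc 1 (k + 1)) =>
              MeasurableSpace.comap (z i) inferInstance)
            (k + 1) ⟨Nat.succ_le_succ (Nat.zero_le k), le_rfl⟩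
        exact fun s hs => hle2 _ ⟨s, hs, rfl⟩
      exact ((ih.mono hle le_rfl).const_mul _).add (hzk.const_mul _)
  have hLmeas : ∀ k, Measurable (L k) := fun k => (hLG k).mono (hGle k) le_rfl
  -- independence of L k and z (k+1)
  have hindep : ∀ k, IndepFun (L k) (z (k + 1)) μ := by
    intro k
    have hdisj : Disjoint (Set.Icc 1 k) ({k + 1} : Set ℕ) := by
      simp only [Set.disjoint_singleton_right, Set.mem_Icc]
      omega
    have h := indep_iSup_of_disjoint (fun i => (hzmeas i).comap_le)
      ((iIndepFun_iff_iIndep _ _ _).mp hzindep) hdisj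
    rw [IndepFun_iff_Indep]
    rw [Indep_iff] at h ⊢
    intro t1 t2 ht1 ht2
    refine h t1 t2 (measurable_iff_comap_le.mp (hLG k) _ ht1) ?_
    exact le_iSup₂ (f := fun i (_ : i ∈ ({k + 1} : Set ℕ)) =>
        MeasurableSpace.comap (z i) inferInstance)
      (k + 1) (Set.mem_singleton (k + 1)) _ ht2
  -- the law, for all k (including k = 0, where the law is a Dirac mass)
  have key : ∀ k, Measure.map (L k) μ
      = gaussianReal (Real.sqrt (abar k) * (y₀ - f)) (Real.toNNReal (1 - abar k)) := by
    intro k; induction k with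
    | zero =>
      have h0 : L 0 = fun _ => y₀ - f := funext fun ω => by rw [hL, hY0]
      rw [h0, habar0]
      simp [Measure.map_const]
    | succ k ih =>
      have h1 : L (k + 1) = fun ω =>
          Real.sqrt (1 - β (k + 1)) * L k ω + Real.sqrt (β (k + 1)) * z (k + 1) ω :=
        funext (hLrec k)
      have hβ1 := (hβmem k).1
      have hβ2 := (hβmem k).2
      have hb : Real.sqrt (β (k + 1)) ≠ 0 := by positivity
      rw [h1, map_const_mul_add_const_mul (hLmeas k) (hzmeas (k + 1)) (hindep k) ih
        (hzlaw (k + 1)) _ _ hb]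
      congr 1
      · rw [habar_succ, mul_comm (abar k), Real.sqrt_mul (by linarith)]
        ring
      · ext
        push_cast
        rw [Real.sq_sqrt (by linarith), Real.sq_sqrt (by linarith),
          Real.coe_toNNReal _ (by linarith [habar_le k]),
          Real.coe_toNNReal _ (by linarith [habar_le (k + 1)]), habar_succ]
        ring
  exact fun k _ => key k
end
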